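/- Let r ≥ 1 be an integer, M > 0 a real number, and k a positive odd integer. Set p := 1 + ⌊r/2⌋. For y ∈ [−2M√r, 2M√r] define T_k(y) := cos(k·arccos(y/(2M√r))), and for x ∈ ℝ^r with 0 < ‖x‖ ≤ 2M√r (Euclidean norm) define f_k(x) := (T_k(‖x‖)/‖x‖)^{2p}. Let ω := r·vol(B^r) denote the surface area of the unit (r−1)-sphere in ℝ^r, where vol(B^r) is the Lebesgue volume of the unit ball. Then for every real c with 0 < c ≤ (6/5)·M√r, (1/5)^{2p} · c^r · k^{2p − r} · ω / (r · (M√r)^{2p}) ≤ ∫_{0 < ‖x‖ ≤ c/k} f_k(x) dx ≤ c^r · k^{2p − r} · ω / (r · (M√r)^{2p}). -/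

import Mathlib

open MeasureTheory

/-- The surface area `ω = r · vol(Bʳ)` of the unit `(r-1)`-sphere in `ℝ^r`. -/
noncomputable def unitSphereArea (r : ℕ) : ℝ :=
  r * (volume (Metric.ball (0 : EuclideanSpace ℝ (Fin r)) 1)).toReal

/-- The kernel `f_k(x) = (T_k(‖x‖)/‖x‖)^{2p}`, `p = 1 + ⌊r/2⌋`, built from the
Chebyshev polynomial `T_k(y) = cos(k·arccos(y/(2M√r)))` rescaled to
`[-2M√r, 2M√r]`. -/
noncomputable def chebKernel (r k : ℕ) (M : ℝ) (x : EuclideanSpace ℝ (Fin r)) : ℝ :=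
  (Real.cos (k * Real.arccos (‖x‖ / (2 * M * Real.sqrt r))) / ‖x‖) ^ (2 * (1 + r / 2))

open Real in
lemma cheb_abs_bounds (k : ℕ) (hk : 0 < k) (hodd : Odd k) (s : ℝ) (hs : 0 < s)
    (t : ℝ) (ht0 : 0 < t) (ht : (k : ℝ) * t ≤ 6 / 5 * s) :
    (k : ℝ) * t / (5 * s) ≤ |Real.cos (k * Real.arccos (t / (2 * s)))| ∧
      |Real.cos (k * Real.arccos (t / (2 * s)))| ≤ (k : ℝ) * t / s := by
  have hk1 : (1 : ℝ) ≤ k := by exact_mod_cast hk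
  have hπ : 0 < π := Real.pi_pos
  have hπ4 : π ≤ 4 := Real.pi_le_four
  set u := t / (2 * s) with hu_def
  have hu0 : 0 < u := by positivity
  have hueq : (k : ℝ) * u = (k : ℝ) * t / (2 * s) := by rw [hu_def]; ring
  have hku : (k : ℝ) * u ≤ 3 / 5 := by
    rw [hueq, div_le_iff₀ (by positivity)]; nlinarith
  have hu1 : u ≤ 1 := by nlinarith
  set φ := Real.arcsin u with hφ_def
  have hφ0 : 0 ≤ φ := Real.arcsin_nonneg.2 hu0.le
  have hsin : Real.sin φ = u := Real.sin_arcsin (by linarith) hu1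
  have huφ : u ≤ φ := by
    have := Real.sin_le hφ0
    linarith [hsin]
  have hφu : φ ≤ π / 2 * u := by
    have h1 : φ ≤ π / 2 := Real.arcsin_le_pi_div_two u
    have h2 := Real.mul_le_sin hφ0 h1
    rw [hsin, div_mul_eq_mul_div, div_le_iff₀ hπ] at h2
    nlinarith
  -- reduce cos(k arccos u) to ± sin(k φ)
  obtain ⟨m, hm⟩ := hodd
  have hmk : (k : ℝ) = 2 * m + 1 := by exact_mod_cast hm
  have harccos : Real.arccos u = π / 2 - φ := Real.arccos_eq_pi_div_two_sub_arcsin u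
  have hangle : (k : ℝ) * Real.arccos u = (π / 2 - k * φ) + (m : ℤ) * π := by
    rw [harccos, hmk]; push_cast; ring
  have hcos : Real.cos (k * Real.arccos u) = (-1 : ℝ) ^ (m : ℤ) * Real.sin ((k : ℝ) * φ) := by
    rw [hangle, Real.cos_add_int_mul_pi, Real.cos_pi_div_two_sub]
  have habs : |Real.cos (k * Real.arccos u)| = |Real.sin ((k : ℝ) * φ)| := by
    rw [hcos, abs_mul]
    simp
  -- bounds on sin(kφ)
  have hθ0 : 0 ≤ (k : ℝ) * φ := by positivity
  have hθle : (k : ℝ) * φ ≤ π / 2 * ((k : ℝ) * u) := by nlinarith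
  have hθhalf : (k : ℝ) * φ ≤ π / 2 := by nlinarith
  have hsin0 : 0 ≤ Real.sin ((k : ℝ) * φ) :=
    Real.sin_nonneg_of_nonneg_of_le_pi hθ0 (by linarith)
  have habs' : |Real.sin ((k : ℝ) * φ)| = Real.sin ((k : ℝ) * φ) := abs_of_nonneg hsin0
  constructor
  · rw [habs, habs']
    have hjordan := Real.mul_le_sin hθ0 hθhalf
    rw [div_mul_eq_mul_div, div_le_iff₀ hπ] at hjordan
    have hπ5 : π ≤ 5 := by linarith
    have h1 : (k : ℝ) * u ≤ (k : ℝ) * φ := by nlinarith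
    have h3 : (k : ℝ) * t / (5 * s) = 2 / 5 * ((k : ℝ) * u) := by
      rw [hueq]; ring
    rw [h3]
    have hprod : Real.sin ((k : ℝ) * φ) * π ≤ Real.sin ((k : ℝ) * φ) * 5 :=
      mul_le_mul_of_nonneg_left hπ5 hsin0
    linarith
  · rw [habs, habs']
    have h1 : Real.sin ((k : ℝ) * φ) ≤ (k : ℝ) * φ := Real.sin_le hθ0
    have h2 : 2 * ((k : ℝ) * u) = (k : ℝ) * t / s := by
      rw [hueq]; ring
    have hprod : π / 2 * ((k : ℝ) * u) ≤ 2 * ((k : ℝ) * u) :=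
      mul_le_mul_of_nonneg_right (by linarith) (by positivity)
    linarith

lemma chebKernel_bounds (r k : ℕ) (hr : 1 ≤ r) (hk : 0 < k) (hodd : Odd k) (M : ℝ)
    (hM : 0 < M) (x : EuclideanSpace ℝ (Fin r)) (hx0 : 0 < ‖x‖)
    (hx : (k : ℝ) * ‖x‖ ≤ 6 / 5 * (M * Real.sqrt r)) :
    ((k : ℝ) / (5 * (M * Real.sqrt r))) ^ (2 * (1 + r / 2)) ≤ chebKernel r k M x ∧
      chebKernel r k M x ≤ ((k : ℝ) / (M * Real.sqrt r)) ^ (2 * (1 + r / 2)) := by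
  have hs : 0 < M * Real.sqrt r := by
    have : (0:ℝ) < r := by exact_mod_cast hr
    positivity
  obtain ⟨hlo, hhi⟩ := cheb_abs_bounds k hk hodd (M * Real.sqrt r) hs ‖x‖ hx0 hx
  have harg : 2 * M * Real.sqrt r = 2 * (M * Real.sqrt r) := by ring
  have heven : Even (2 * (1 + r / 2)) := even_two_mul _
  have hker : chebKernel r k M x =
      |Real.cos (k * Real.arccos (‖x‖ / (2 * (M * Real.sqrt r)))) / ‖x‖| ^ (2 * (1 + r / 2)) := by
    rw [chebKernel, harg]
    exact (heven.pow_abs _).symm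
  have habsdiv : |Real.cos (k * Real.arccos (‖x‖ / (2 * (M * Real.sqrt r)))) / ‖x‖|
      = |Real.cos (k * Real.arccos (‖x‖ / (2 * (M * Real.sqrt r))))| / ‖x‖ := by
    rw [abs_div, abs_of_pos hx0]
  rw [hker, habsdiv]
  constructor
  · apply pow_le_pow_left₀ (by positivity)
    rw [div_le_div_iff₀ (by positivity) hx0]
    rw [div_le_iff₀ (by positivity)] at hlo
    linarith
  · apply pow_le_pow_left₀ (by positivity)
    rw [div_le_div_iff₀ hx0 hs]
    rw [le_div_iff₀ hs] at hhi
    linarith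

theorem chebyshev_kernel_mass_near_zero (r : ℕ) (hr : 1 ≤ r) (M : ℝ) (hM : 0 < M)
    (k : ℕ) (hk : 0 < k) (hodd : Odd k) (c : ℝ) (hc0 : 0 < c)
    (hc : c ≤ 6 / 5 * (M * Real.sqrt r)) :
    (1 / 5 : ℝ) ^ (2 * (1 + r / 2)) * c ^ r * (k : ℝ) ^ (2 * (1 + r / 2) - r) *
        unitSphereArea r / (r * (M * Real.sqrt r) ^ (2 * (1 + r / 2))) ≤
      (∫ x in {x : EuclideanSpace ℝ (Fin r) | 0 < ‖x‖ ∧ ‖x‖ ≤ c / k},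
        chebKernel r k M x) ∧
    (∫ x in {x : EuclideanSpace ℝ (Fin r) | 0 < ‖x‖ ∧ ‖x‖ ≤ c / k},
        chebKernel r k M x) ≤
      c ^ r * (k : ℝ) ^ (2 * (1 + r / 2) - r) * unitSphereArea r /
        (r * (M * Real.sqrt r) ^ (2 * (1 + r / 2))) := by
  have hr0 : (0:ℝ) < r := by exact_mod_cast hr
  have hk0 : (0:ℝ) < k := by exact_mod_cast hk
  have hs : 0 < M * Real.sqrt r := by positivity
  have hrp2 : r ≤ 2 * (1 + r / 2) := by omega
  have hck : 0 < c / k := by positivity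
  set V := (volume (Metric.ball (0 : EuclideanSpace ℝ (Fin r)) 1)).toReal with hV_def
  have hV0 : 0 ≤ V := ENNReal.toReal_nonneg
  set A := {x : EuclideanSpace ℝ (Fin r) | 0 < ‖x‖ ∧ ‖x‖ ≤ c / k} with hA_def
  have hA_eq : A = Metric.closedBall 0 (c / k) \ {0} := by
    ext x
    simp only [hA_def, Set.mem_setOf_eq, Set.mem_diff, Metric.mem_closedBall,
      dist_zero_right, Set.mem_singleton_iff, norm_pos_iff]
    tauto
  have hAmeas : MeasurableSet A := by
    rw [hA_eq]; exact measurableSet_closedBall.diff (measurableSet_singleton _)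
  have h0 : volume ({0} : Set (EuclideanSpace ℝ (Fin r))) = 0 := by
    have h1 : ({0} : Set (EuclideanSpace ℝ (Fin r))) = Metric.closedBall 0 0 :=
      Metric.closedBall_zero.symm
    rw [h1, Measure.addHaar_closedBall _ _ le_rfl, finrank_euclideanSpace_fin,
      zero_pow (by omega), ENNReal.ofReal_zero, zero_mul]
  have hvol : volume A = ENNReal.ofReal ((c / k) ^ r) *
      volume (Metric.ball (0 : EuclideanSpace ℝ (Fin r)) 1) := by
    rw [hA_eq, measure_diff_null h0, Measure.addHaar_closedBall _ _ hck.le,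
      finrank_euclideanSpace_fin]
  have hball_lt : volume (Metric.ball (0 : EuclideanSpace ℝ (Fin r)) 1) < ⊤ :=
    measure_ball_lt_top
  have hAfin : volume A ≠ ⊤ := by
    rw [hvol]
    exact (ENNReal.mul_lt_top ENNReal.ofReal_lt_top hball_lt).ne
  have hAvol : (volume A).toReal = (c / k) ^ r * V := by
    rw [hvol, ENNReal.toReal_mul, ENNReal.toReal_ofReal (by positivity), hV_def]
  have hbnd : ∀ x ∈ A, ((k : ℝ) / (5 * (M * Real.sqrt r))) ^ (2 * (1 + r / 2))
      ≤ chebKernel r k M x ∧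
      chebKernel r k M x ≤ ((k : ℝ) / (M * Real.sqrt r)) ^ (2 * (1 + r / 2)) := by
    intro x hx
    obtain ⟨hx0, hx1⟩ := hx
    refine chebKernel_bounds r k hr hk hodd M hM x hx0 ?_
    calc (k : ℝ) * ‖x‖ ≤ (k : ℝ) * (c / k) := by
          exact mul_le_mul_of_nonneg_left hx1 hk0.le
      _ = c := by field_simp
      _ ≤ 6 / 5 * (M * Real.sqrt r) := hc
  have hmeas : Measurable (chebKernel r k M) := by
    unfold chebKernel
    exact ((Real.continuous_cos.comp (continuous_const.mul
      (Real.continuous_arccos.comp (continuous_norm.div_const _)))).measurable.div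
      measurable_norm).pow_const _
  have hker_nonneg : ∀ x, 0 ≤ chebKernel r k M x := by
    intro x
    rw [chebKernel]
    exact (even_two_mul _).pow_nonneg _
  have hint : IntegrableOn (chebKernel r k M) A := by
    apply Measure.integrableOn_of_bounded (M := ((k : ℝ) / (M * Real.sqrt r)) ^ (2 * (1 + r / 2)))
      hAfin hmeas.aestronglyMeasurable
    refine ae_restrict_of_forall_mem hAmeas fun x hx => ?_
    rw [Real.norm_eq_abs, abs_of_nonneg (hker_nonneg x)]
    exact (hbnd x hx).2
  have hlow : ((k : ℝ) / (5 * (M * Real.sqrt r))) ^ (2 * (1 + r / 2)) * ((volume A).toReal)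
      ≤ ∫ x in A, chebKernel r k M x := by
    have h := setIntegral_mono_on
      (f := fun _ : EuclideanSpace ℝ (Fin r) => ((k : ℝ) / (5 * (M * Real.sqrt r))) ^ (2 * (1 + r / 2)))
      (g := chebKernel r k M)
      (integrableOn_const hAfin) hint hAmeas (fun x hx => (hbnd x hx).1)
    rwa [setIntegral_const, smul_eq_mul, mul_comm] at h
  have hhigh : (∫ x in A, chebKernel r k M x)
      ≤ ((k : ℝ) / (M * Real.sqrt r)) ^ (2 * (1 + r / 2)) * ((volume A).toReal) := by
    have h := setIntegral_mono_on
      (f := chebKernel r k M)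
      (g := fun _ : EuclideanSpace ℝ (Fin r) => ((k : ℝ) / (M * Real.sqrt r)) ^ (2 * (1 + r / 2)))
      hint (integrableOn_const hAfin) hAmeas (fun x hx => (hbnd x hx).2)
    rwa [setIntegral_const, smul_eq_mul, mul_comm] at h
  have hpow : (k : ℝ) ^ (2 * (1 + r / 2) - r) = (k : ℝ) ^ (2 * (1 + r / 2)) / (k : ℝ) ^ r :=
    pow_sub₀ _ hk0.ne' hrp2
  have hωeq : unitSphereArea r = r * V := by rw [unitSphereArea, hV_def]
  constructor
  · refine le_trans (le_of_eq ?_) hlow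
    rw [hAvol, hωeq, hpow, div_pow, div_pow, div_pow]
    field_simp
    ring
  · refine le_trans hhigh (le_of_eq ?_)
    rw [hAvol, hωeq, hpow, div_pow, div_pow]
    field_simp
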